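/- The numbers z_i + t_i for i = 1,…,h′ together with the numbers z′_i + t′_i for i = 1,…,h are pairwise distinct, and {z_i + t_i : i = 1,…,h′} ∪ {z′_i + t′_i : i = 1,…,h} = {t_0 + 1, t_0 + 2, …, m + s}. -/

import Mathlib

open Finset
open scoped Classical

noncomputable section

namespace GenMaj

/-- Extended entries of a finite (1-indexed) sequence `x` of length `w`:
`+∞` for indices `≤ 0` and `-∞` for indices `> w`. -/
def ext (w : ℤ) (x : ℤ → ℤ) (i : ℤ) : EReal :=
  if i ≤ 0 then ⊤ else if i ≤ w then ((x i : ℝ) : EReal) else ⊥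

/-- `h_j = min { i | d_{i-j+1} < g_i }` (with the above conventions), where `d` has
length `m` and `g` has length `m + s`. -/
def hIdx (m s : ℤ) (d g : ℤ → ℤ) (j : ℤ) : ℤ :=
  sInf {i : ℤ | ext m d (i - j + 1) < ext (m + s) g i}

/-- Weak generalized majorization `g ≺″ (d, a)`. -/
def WeakMaj (m s : ℤ) (d a g : ℤ → ℤ) : Prop :=
  (∀ i ∈ Finset.Icc (1 : ℤ) m, g (i + s) ≤ d i) ∧
  (∀ j ∈ Finset.Icc (1 : ℤ) s,
      (∑ i ∈ Finset.Icc (hIdx m s d g j - j + 1) m, d i) +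
          (∑ i ∈ Finset.Icc (j + 1) s, a i) ≤
        ∑ i ∈ Finset.Icc (hIdx m s d g j + 1) (m + s), g i) ∧
  ((∑ i ∈ Finset.Icc (1 : ℤ) m, d i) + (∑ i ∈ Finset.Icc (1 : ℤ) s, a i) ≤
      ∑ i ∈ Finset.Icc (1 : ℤ) (m + s), g i)

/-- Generalized majorization `g ≺′ (d, a)`. -/
def GenMajRel (m s : ℤ) (d a g : ℤ → ℤ) : Prop :=
  (∀ i ∈ Finset.Icc (1 : ℤ) m, g (i + s) ≤ d i) ∧
  (∀ j ∈ Finset.Icc (1 : ℤ) s,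
      (∑ i ∈ Finset.Icc (1 : ℤ) (hIdx m s d g j), g i) -
          (∑ i ∈ Finset.Icc (1 : ℤ) (hIdx m s d g j - j), d i) ≤
        ∑ i ∈ Finset.Icc (1 : ℤ) j, a i) ∧
  (∑ i ∈ Finset.Icc (1 : ℤ) (m + s), g i =
      (∑ i ∈ Finset.Icc (1 : ℤ) m, d i) + (∑ i ∈ Finset.Icc (1 : ℤ) s, a i))

/-- The quantity `q_j = s - #{i ∈ S : c_i < d_j} + #{i > j : i ∉ Δ} + 1`. -/
def qd (m s : ℤ) (c d : ℤ → ℤ) (S Δ : Finset ℤ) (j : ℤ) : ℤ :=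
  s - ((S.filter (fun i => c i < d j)).card : ℤ) +
      (((Finset.Icc (j + 1) m).filter (fun i => i ∉ Δ)).card : ℤ) + 1

/-- The quantity `#{i : a_i > c_l} - s + #{i ∈ S : i > l} - #{i ∉ Δ : d_i < c_l} + 1`. -/
def Na (m s : ℤ) (a c d : ℤ → ℤ) (S Δ : Finset ℤ) (l : ℤ) : ℤ :=
  (((Finset.Icc (1 : ℤ) s).filter (fun i => c l < a i)).card : ℤ) - s +
      ((S.filter (fun i => l < i)).card : ℤ) -
      (((Finset.Icc (1 : ℤ) m).filter (fun i => i ∉ Δ ∧ d i < c l)).card : ℤ) + 1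

/-- The membership criterion for the set `Δ` at the index `j`:  `j ∈ Δ` unless
`q_j ≤ s` and either (a) for the minimal `l ∈ S` with `d_j > c_l` one has
`#{i : a_i > c_l} ≥ s - #{i ∈ S : i > l} + #{i ∉ Δ : d_i < c_l}` and `d_j` is among the
smallest `Na l` entries of `e` (the nonincreasing union of `d` and `a`, where `a`-entries
are placed before equal `d`-entries) that are bigger than `c_l`, or (b)
`Σ_{i ∈ S, c_i < d_j} c_i ≥ Σ_{i ∉ Δ, i > j} d_i + d_j + Σ_{i=q_j+1}^{s} a_i`.
The dual criterion for `S` is obtained by swapping the roles of the data. -/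
def DeltaCond (m s : ℤ) (a c d : ℤ → ℤ) (S Δ : Finset ℤ) (j : ℤ) : Prop :=
  ¬ (qd m s c d S Δ j ≤ s ∧
      ((∃ l ∈ S, c l < d j ∧ (∀ l' ∈ S, c l' < d j → l ≤ l') ∧
          1 ≤ Na m s a c d S Δ l ∧
          (((Finset.Icc (j + 1) m).filter (fun i => c l < d i)).card : ℤ) +
              (((Finset.Icc (1 : ℤ) s).filter (fun i => c l < a i ∧ a i < d j)).card : ℤ) + 1 ≤
            Na m s a c d S Δ l) ∨
        ((∑ i ∈ (Finset.Icc (j + 1) m).filter (fun i => i ∉ Δ), d i) + d j +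
            (∑ i ∈ Finset.Icc (qd m s c d S Δ j + 1) s, a i) ≤
          ∑ i ∈ S.filter (fun i => c i < d j), c i)))

/-- `t_j = s - (h' - j) + #{i ∉ Δ : d_i < c^j}` for `1 ≤ j ≤ h'`, with
`t_0 = m + s - h - h'` and `t_{h'+1} = s + 1`. -/
def tC (m s h h' : ℤ) (d : ℤ → ℤ) (Δ : Finset ℤ) (C : ℤ → ℤ) (j : ℤ) : ℤ :=
  if j = 0 then m + s - h - h'
  else if j = h' + 1 then s + 1
  else s - (h' - j) + (((Finset.Icc (1 : ℤ) m).filter (fun i => i ∉ Δ ∧ d i < C j)).card : ℤ)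

/-- `z_j = #{i : d_i > c^j}` for `1 ≤ j ≤ h'`, with `z_0 = 0` and `z_{h'+1} = m`. -/
def zC (m h' : ℤ) (d : ℤ → ℤ) (C : ℤ → ℤ) (j : ℤ) : ℤ :=
  if j = 0 then 0
  else if j = h' + 1 then m
  else (((Finset.Icc (1 : ℤ) m).filter (fun i => C j < d i)).card : ℤ)

/-- `m_j = #{i : a_i > c^j}` for `1 ≤ j ≤ h'`, with `m_0 = 0`. -/
def mC (s : ℤ) (a : ℤ → ℤ) (C : ℤ → ℤ) (j : ℤ) : ℤ :=
  if j = 0 then 0 else (((Finset.Icc (1 : ℤ) s).filter (fun i => C j < a i)).card : ℤ)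

/-- `w_y = #{i ∉ Δ : c^y > d_i > c^{y+1}}` for `0 ≤ y ≤ h'` (with `c^0 = +∞`,
`c^{h'+1} = -∞`). -/
def wC (m h' : ℤ) (d : ℤ → ℤ) (Δ : Finset ℤ) (C : ℤ → ℤ) (y : ℤ) : ℤ :=
  (((Finset.Icc (1 : ℤ) m).filter (fun i =>
      i ∉ Δ ∧ (1 ≤ y → d i < C y) ∧ (y + 1 ≤ h' → C (y + 1) < d i))).card : ℤ)

end GenMaj

open GenMaj

namespace GenMajAux

lemma cross_lt (h h' : ℤ) (C D : ℤ → ℤ)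
    (hC : AntitoneOn C (Set.Icc 1 h')) (hD : AntitoneOn D (Set.Icc 1 h))
    (j j' : ℤ) (hj : j ∈ Finset.Icc (1:ℤ) h') (hj' : j' ∈ Finset.Icc (1:ℤ) h)
    (hlt : C j < D j') :
    j' + (((Finset.Icc (1:ℤ) h').filter (fun i => D j' < C i)).card : ℤ) <
      j + (((Finset.Icc (1:ℤ) h).filter (fun i => C j < D i)).card : ℤ) := by
  simp only [Finset.mem_Icc] at hj hj'
  have sub1 : Finset.Icc (1:ℤ) j' ⊆ (Finset.Icc 1 h).filter (fun i => C j < D i) := by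
    intro i hi
    simp only [Finset.mem_Icc] at hi
    refine Finset.mem_filter.mpr ⟨Finset.mem_Icc.mpr ⟨hi.1, hi.2.trans hj'.2⟩, ?_⟩
    exact hlt.trans_le (hD ⟨hi.1, hi.2.trans hj'.2⟩ ⟨hj'.1, hj'.2⟩ hi.2)
  have c1 := Finset.card_le_card sub1
  have hc1 : (Finset.Icc (1:ℤ) j').card = (j' + 1 - 1).toNat := Int.card_Icc _ _
  have sub2 : (Finset.Icc (1:ℤ) h').filter (fun i => D j' < C i) ⊆ Finset.Icc 1 (j-1) := by
    intro i hi
    obtain ⟨hi1, hi2⟩ := Finset.mem_filter.mp hi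
    simp only [Finset.mem_Icc] at hi1 ⊢
    refine ⟨hi1.1, ?_⟩
    by_contra hcon
    push_neg at hcon
    have hle : C i ≤ C j := hC ⟨hj.1, hj.2⟩ ⟨hi1.1, hi1.2⟩ (by omega)
    exact absurd hi2 (by linarith)
  have c2 := Finset.card_le_card sub2
  have hc2 : (Finset.Icc (1:ℤ) (j-1)).card = (j - 1 + 1 - 1).toNat := Int.card_Icc _ _
  omega

lemma count_mono (h h' : ℤ) (C D : ℤ → ℤ) (hC : AntitoneOn C (Set.Icc 1 h'))
    (i j : ℤ) (hi : i ∈ Finset.Icc (1:ℤ) h') (hj : j ∈ Finset.Icc (1:ℤ) h') (hij : i ≤ j) :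
    ((Finset.Icc (1:ℤ) h).filter (fun x => C i < D x)).card ≤
      ((Finset.Icc (1:ℤ) h).filter (fun x => C j < D x)).card := by
  simp only [Finset.mem_Icc] at hi hj
  apply Finset.card_le_card
  intro x hx
  obtain ⟨h1, h2⟩ := Finset.mem_filter.mp hx
  exact Finset.mem_filter.mpr ⟨h1, lt_of_le_of_lt (hC ⟨hi.1, hi.2⟩ ⟨hj.1, hj.2⟩ hij) h2⟩

lemma key (m s h h' : ℤ) (hm : 0 ≤ m) (d : ℤ → ℤ) (Δ : Finset ℤ)
    (hΔsub : Δ ⊆ Finset.Icc 1 m) (hcard : h = (Δ.card : ℤ))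
    (D C : ℤ → ℤ)
    (hDval : Δ.val.map d = (Finset.Icc (1 : ℤ) h).val.map D)
    (j : ℤ) (hj : j ∈ Finset.Icc (1:ℤ) h')
    (hne : ∀ i ∈ Finset.Icc (1:ℤ) m, d i ≠ C j) :
    GenMaj.zC m h' d C j + GenMaj.tC m s h h' d Δ C j =
      (m + s - h - h') + j + (((Finset.Icc (1:ℤ) h).filter (fun i => C j < D i)).card : ℤ) := by
  simp only [Finset.mem_Icc] at hj
  have hj0 : j ≠ 0 := by omega
  have hj1 : j ≠ h' + 1 := by omega
  rw [GenMaj.zC, GenMaj.tC, if_neg hj0, if_neg hj1, if_neg hj0, if_neg hj1]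
  set z := ((Finset.Icc (1:ℤ) m).filter (fun i => C j < d i)).card with hz
  set L := ((Finset.Icc (1:ℤ) m).filter (fun i => d i < C j)).card with hL
  set w := ((Finset.Icc (1:ℤ) m).filter (fun i => i ∉ Δ ∧ d i < C j)).card with hw
  set pΔ := (Δ.filter (fun i => d i < C j)).card with hpΔ
  set zΔ := (Δ.filter (fun i => C j < d i)).card with hzΔ
  have f1 : z + L = m.toNat := by
    have := Finset.card_filter_add_card_filter_not
      (s := Finset.Icc (1:ℤ) m) (p := fun i => C j < d i)
    have hcongr : (Finset.Icc (1:ℤ) m).filter (fun i => ¬ (C j < d i)) =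
        (Finset.Icc (1:ℤ) m).filter (fun i => d i < C j) := by
      apply Finset.filter_congr
      intro i hi
      have := hne i hi
      simp only [not_lt, eq_iff_iff]
      exact ⟨fun hle => lt_of_le_of_ne hle this, fun hlt => hlt.le⟩
    rw [hcongr] at this
    have hcI : (Finset.Icc (1:ℤ) m).card = (m + 1 - 1).toNat := Int.card_Icc _ _
    omega
  have f2 : pΔ + w = L := by
    have hsplit := Finset.card_filter_add_card_filter_not
      (s := (Finset.Icc (1:ℤ) m).filter (fun i => d i < C j)) (p := fun i => i ∈ Δ)
    have e1 : ((Finset.Icc (1:ℤ) m).filter (fun i => d i < C j)).filter (fun i => i ∈ Δ)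
        = Δ.filter (fun i => d i < C j) := by
      ext i
      simp only [Finset.mem_filter]
      exact ⟨fun ⟨⟨_, h2⟩, h3⟩ => ⟨h3, h2⟩, fun ⟨h1, h2⟩ => ⟨⟨hΔsub h1, h2⟩, h1⟩⟩
    have e2 : ((Finset.Icc (1:ℤ) m).filter (fun i => d i < C j)).filter (fun i => i ∉ Δ)
        = (Finset.Icc (1:ℤ) m).filter (fun i => i ∉ Δ ∧ d i < C j) := by
      rw [Finset.filter_filter]
      apply Finset.filter_congr
      intro i _
      simp [and_comm]
    rw [e1, e2] at hsplit
    omega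
  have f4 : zΔ + pΔ = Δ.card := by
    have := Finset.card_filter_add_card_filter_not
      (s := Δ) (p := fun i => C j < d i)
    have hcongr : Δ.filter (fun i => ¬ (C j < d i)) = Δ.filter (fun i => d i < C j) := by
      apply Finset.filter_congr
      intro i hi
      have := hne i (hΔsub hi)
      simp only [not_lt, eq_iff_iff]
      exact ⟨fun hle => lt_of_le_of_ne hle this, fun hlt => hlt.le⟩
    rw [hcongr] at this
    omega
  have f5 : zΔ = ((Finset.Icc (1:ℤ) h).filter (fun i => C j < D i)).card := by
    have := congrArg (Multiset.countP (fun x => C j < x)) hDval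
    rw [Multiset.countP_map, Multiset.countP_map] at this
    simpa [hzΔ, Finset.card, Finset.filter] using this
  omega

end GenMajAux


/-- The numbers `z_i + t_i` (`i = 1,…,h'`) and `z'_i + t'_i` (`i = 1,…,h`) are pairwise distinct and fill `{t_0+1, …, m+s}`. -/
theorem statement10
    (m n s k : ℤ) (hm : 0 ≤ m) (hn : 0 ≤ n) (hs : 0 ≤ s) (hk : 0 ≤ k)
    (hmnsk : m + s = n + k)
    (a b c d : ℤ → ℤ)
    (ha : AntitoneOn a (Set.Icc 1 s)) (hb : AntitoneOn b (Set.Icc 1 k))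
    (hcmono : AntitoneOn c (Set.Icc 1 n)) (hdmono : AntitoneOn d (Set.Icc 1 m))
    (hcd : ∀ i ∈ Finset.Icc (1 : ℤ) n, ∀ j ∈ Finset.Icc (1 : ℤ) m, c i ≠ d j)
    (S Δ : Finset ℤ) (hSsub : S ⊆ Finset.Icc 1 n) (hΔsub : Δ ⊆ Finset.Icc 1 m)
    (hSdef : ∀ j ∈ Finset.Icc (1 : ℤ) n, (j ∈ S ↔ DeltaCond n k b d c Δ S j))
    (hΔdef : ∀ j ∈ Finset.Icc (1 : ℤ) m, (j ∈ Δ ↔ DeltaCond m s a c d S Δ j))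
    (h h' : ℤ) (hcardΔ : h = (Δ.card : ℤ)) (hcardS : h' = (S.card : ℤ))
    (D C : ℤ → ℤ)
    (hDmono : AntitoneOn D (Set.Icc 1 h))
    (hDval : Δ.val.map d = (Finset.Icc (1 : ℤ) h).val.map D)
    (hCmono : AntitoneOn C (Set.Icc 1 h'))
    (hCval : S.val.map c = (Finset.Icc (1 : ℤ) h').val.map C)
    :
    (∀ i ∈ Finset.Icc (1 : ℤ) h', ∀ j ∈ Finset.Icc (1 : ℤ) h',
        zC m h' d C i + tC m s h h' d Δ C i = zC m h' d C j + tC m s h h' d Δ C j → i = j) ∧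
    (∀ i ∈ Finset.Icc (1 : ℤ) h, ∀ j ∈ Finset.Icc (1 : ℤ) h,
        zC n h c D i + tC n k h' h c S D i = zC n h c D j + tC n k h' h c S D j → i = j) ∧
    (∀ i ∈ Finset.Icc (1 : ℤ) h', ∀ j ∈ Finset.Icc (1 : ℤ) h,
        zC m h' d C i + tC m s h h' d Δ C i ≠ zC n h c D j + tC n k h' h c S D j) ∧
    ((Finset.Icc (1 : ℤ) h').image (fun i => zC m h' d C i + tC m s h h' d Δ C i) ∪
        (Finset.Icc (1 : ℤ) h).image (fun i => zC n h c D i + tC n k h' h c S D i) =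
      Finset.Icc (tC m s h h' d Δ C 0 + 1) (m + s)) := by
  classical
  have hh0 : (0:ℤ) ≤ h := by rw [hcardΔ]; exact Int.ofNat_nonneg _
  have hh'0 : (0:ℤ) ≤ h' := by rw [hcardS]; exact Int.ofNat_nonneg _
  have hCmem : ∀ j ∈ Finset.Icc (1:ℤ) h', ∃ l ∈ S, c l = C j := by
    intro j hj
    have h1 : C j ∈ (Finset.Icc (1:ℤ) h').val.map C :=
      Multiset.mem_map_of_mem C (Finset.mem_val.mpr hj)
    rw [← hCval] at h1
    obtain ⟨l, hl, hlc⟩ := Multiset.mem_map.mp h1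
    exact ⟨l, Finset.mem_val.mp hl, hlc⟩
  have hDmem : ∀ j ∈ Finset.Icc (1:ℤ) h, ∃ l ∈ Δ, d l = D j := by
    intro j hj
    have h1 : D j ∈ (Finset.Icc (1:ℤ) h).val.map D :=
      Multiset.mem_map_of_mem D (Finset.mem_val.mpr hj)
    rw [← hDval] at h1
    obtain ⟨l, hl, hlc⟩ := Multiset.mem_map.mp h1
    exact ⟨l, Finset.mem_val.mp hl, hlc⟩
  have hne_dC : ∀ j ∈ Finset.Icc (1:ℤ) h', ∀ i ∈ Finset.Icc (1:ℤ) m, d i ≠ C j := by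
    intro j hj i hi
    obtain ⟨l, hl, hlc⟩ := hCmem j hj
    rw [← hlc]
    exact fun hcon => hcd l (hSsub hl) i hi hcon.symm
  have hne_cD : ∀ j ∈ Finset.Icc (1:ℤ) h, ∀ i ∈ Finset.Icc (1:ℤ) n, c i ≠ D j := by
    intro j hj i hi
    obtain ⟨l, hl, hlc⟩ := hDmem j hj
    rw [← hlc]
    exact hcd i hi l (hΔsub hl)
  have hCD : ∀ i ∈ Finset.Icc (1:ℤ) h', ∀ j ∈ Finset.Icc (1:ℤ) h, C i ≠ D j := by
    intro i hi j hj
    obtain ⟨l, hl, hlc⟩ := hCmem i hi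
    obtain ⟨l', hl', hlc'⟩ := hDmem j hj
    rw [← hlc, ← hlc']
    exact hcd l (hSsub hl) l' (hΔsub hl')
  have key1 : ∀ j ∈ Finset.Icc (1:ℤ) h', zC m h' d C j + tC m s h h' d Δ C j =
      (m + s - h - h') + j + (((Finset.Icc (1:ℤ) h).filter (fun i => C j < D i)).card : ℤ) :=
    fun j hj => GenMajAux.key m s h h' hm d Δ hΔsub hcardΔ D C hDval j hj (hne_dC j hj)
  have key2 : ∀ j ∈ Finset.Icc (1:ℤ) h, zC n h c D j + tC n k h' h c S D j =
      (m + s - h - h') + j + (((Finset.Icc (1:ℤ) h').filter (fun i => D j < C i)).card : ℤ) := by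
    intro j hj
    have := GenMajAux.key n k h' h hn c S hSsub hcardS C D hCval j hj (hne_cD j hj)
    rw [this]
    omega
  have part1 : ∀ i ∈ Finset.Icc (1 : ℤ) h', ∀ j ∈ Finset.Icc (1 : ℤ) h',
      zC m h' d C i + tC m s h h' d Δ C i = zC m h' d C j + tC m s h h' d Δ C j → i = j := by
    intro i hi j hj heq
    rw [key1 i hi, key1 j hj] at heq
    rcases lt_trichotomy i j with hlt | he | hlt
    · have := GenMajAux.count_mono h h' C D hCmono i j hi hj hlt.le
      omega
    · exact he
    · have := GenMajAux.count_mono h h' C D hCmono j i hj hi hlt.le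
      omega
  have part2 : ∀ i ∈ Finset.Icc (1 : ℤ) h, ∀ j ∈ Finset.Icc (1 : ℤ) h,
      zC n h c D i + tC n k h' h c S D i = zC n h c D j + tC n k h' h c S D j → i = j := by
    intro i hi j hj heq
    rw [key2 i hi, key2 j hj] at heq
    rcases lt_trichotomy i j with hlt | he | hlt
    · have := GenMajAux.count_mono h' h D C hDmono i j hi hj hlt.le
      omega
    · exact he
    · have := GenMajAux.count_mono h' h D C hDmono j i hj hi hlt.le
      omega
  have part3 : ∀ i ∈ Finset.Icc (1 : ℤ) h', ∀ j ∈ Finset.Icc (1 : ℤ) h,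
      zC m h' d C i + tC m s h h' d Δ C i ≠ zC n h c D j + tC n k h' h c S D j := by
    intro i hi j hj heq
    rw [key1 i hi, key2 j hj] at heq
    rcases lt_trichotomy (C i) (D j) with hlt | he | hlt
    · have := GenMajAux.cross_lt h h' C D hCmono hDmono i j hi hj hlt
      omega
    · exact hCD i hi j hj he
    · have := GenMajAux.cross_lt h' h D C hDmono hCmono j i hj hi hlt
      omega
  refine ⟨part1, part2, part3, ?_⟩
  have ht0 : tC m s h h' d Δ C 0 = m + s - h - h' := by simp [tC]
  have hcntD : ∀ j : ℤ, (((Finset.Icc (1:ℤ) h).filter (fun i => C j < D i)).card : ℤ) ≤ h := by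
    intro j
    have h1 := Finset.card_le_card (Finset.filter_subset (fun i => C j < D i) (Finset.Icc (1:ℤ) h))
    have h2 : (Finset.Icc (1:ℤ) h).card = (h + 1 - 1).toNat := Int.card_Icc _ _
    omega
  have hcntC : ∀ j : ℤ, (((Finset.Icc (1:ℤ) h').filter (fun i => D j < C i)).card : ℤ) ≤ h' := by
    intro j
    have h1 := Finset.card_le_card (Finset.filter_subset (fun i => D j < C i) (Finset.Icc (1:ℤ) h'))
    have h2 : (Finset.Icc (1:ℤ) h').card = (h' + 1 - 1).toNat := Int.card_Icc _ _
    omega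
  set A := (Finset.Icc (1 : ℤ) h').image (fun i => zC m h' d C i + tC m s h h' d Δ C i) with hA
  set B := (Finset.Icc (1 : ℤ) h).image (fun i => zC n h c D i + tC n k h' h c S D i) with hB
  have hsub : A ∪ B ⊆ Finset.Icc (tC m s h h' d Δ C 0 + 1) (m + s) := by
    intro x hx
    rw [ht0]
    rcases Finset.mem_union.mp hx with hx | hx
    · obtain ⟨i, hi, rfl⟩ := Finset.mem_image.mp hx
      rw [key1 i hi]
      have hc := hcntD i
      simp only [Finset.mem_Icc] at hi ⊢
      omega
    · obtain ⟨i, hi, rfl⟩ := Finset.mem_image.mp hx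
      rw [key2 i hi]
      have hc := hcntC i
      simp only [Finset.mem_Icc] at hi ⊢
      omega
  have hdisj : Disjoint A B := by
    rw [Finset.disjoint_left]
    intro x hxA hxB
    obtain ⟨i, hi, hix⟩ := Finset.mem_image.mp hxA
    obtain ⟨j, hj, hjx⟩ := Finset.mem_image.mp hxB
    exact part3 i hi j hj (hix.trans hjx.symm)
  have hcA : A.card = (Finset.Icc (1 : ℤ) h').card :=
    Finset.card_image_of_injOn (fun x hx y hy hxy =>
      part1 x (Finset.mem_coe.mp hx) y (Finset.mem_coe.mp hy) hxy)
  have hcB : B.card = (Finset.Icc (1 : ℤ) h).card :=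
    Finset.card_image_of_injOn (fun x hx y hy hxy =>
      part2 x (Finset.mem_coe.mp hx) y (Finset.mem_coe.mp hy) hxy)
  have hcU : (A ∪ B).card = A.card + B.card := Finset.card_union_of_disjoint hdisj
  have hcI : (Finset.Icc (tC m s h h' d Δ C 0 + 1) (m + s)).card
      = (m + s + 1 - (tC m s h h' d Δ C 0 + 1)).toNat := Int.card_Icc _ _
  have hch : (Finset.Icc (1 : ℤ) h).card = (h + 1 - 1).toNat := Int.card_Icc _ _
  have hch' : (Finset.Icc (1 : ℤ) h').card = (h' + 1 - 1).toNat := Int.card_Icc _ _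
  exact Finset.eq_of_subset_of_card_le hsub (by omega)
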